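/- arXiv:1809.05117 — 6 statements merged into one kernel-verified Lean document; each statement's English description precedes it below -/
import Mathlib

section
/- A subset C of F_3^n is a 2-cap if and only if it is a Sidon set, i.e., whenever a + b = c + d with a, b, c, d ∈ C, the pair (a,b) is a permutation of the pair (c,d). -/
def IsCap (d : ℕ) {n : ℕ} (C : Set (Fin n → ZMod 3)) : Prop :=
  ∀ s : Finset (Fin n → ZMod 3), ↑s ⊆ C → s.card ≤ d + 2 →
    AffineIndependent (ZMod 3) ((↑) : s → (Fin n → ZMod 3))

def IsSidon {G : Type*} [AddCommGroup G] (A : Set G) : Prop :=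
  ∀ a ∈ A, ∀ b ∈ A, ∀ c ∈ A, ∀ d ∈ A, a + b = c + d →
    (a = c ∧ b = d) ∨ (a = d ∧ b = c)

lemma zmod3_cases : ∀ x : ZMod 3, x ≠ 0 → x = 1 ∨ x = 2 := by decide

lemma two_smul_neg {n : ℕ} (x : Fin n → ZMod 3) : (2 : ZMod 3) • x = -x := by
  rw [show (2 : ZMod 3) = -1 by decide, neg_one_smul]

lemma three_zero {n : ℕ} (x : Fin n → ZMod 3) : x + x + x = 0 := by
  have h : x + x + x = ((1 : ZMod 3) + 1 + 1) • x := by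
    rw [add_smul, add_smul, one_smul]
  rw [h, show ((1 : ZMod 3) + 1 + 1) = 0 by decide, zero_smul]

lemma sidon_false {n : ℕ} {C : Set (Fin n → ZMod 3)} (hS : IsSidon C)
    {p q r s : Fin n → ZMod 3}
    (hp : p ∈ C) (hq : q ∈ C) (hr : r ∈ C) (hs : s ∈ C)
    (hpr : p ≠ r) (hps : p ≠ s) (h : p + q = r + s) : False := by
  rcases hS p hp q hq r hr s hs h with ⟨h1, _⟩ | ⟨h1, _⟩
  · exact hpr h1
  · exact hps h1

lemma sidon_dep {n : ℕ} {C : Set (Fin n → ZMod 3)} (hS : IsSidon C)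
    (t : Finset (Fin n → ZMod 3)) (htC : ↑t ⊆ C) (htc : t.card ≤ 4)
    (W : (Fin n → ZMod 3) → ZMod 3)
    (h0 : ∑ x ∈ t, W x = 0) (h1 : ∑ x ∈ t, W x • x = 0) : ∀ x ∈ t, W x = 0 := by
  classical
  obtain ⟨u, hu⟩ : ∃ u, u = t.filter (fun x => W x ≠ 0) := ⟨_, rfl⟩
  have hsub : u ⊆ t := hu ▸ Finset.filter_subset _ _
  have hmemC : ∀ x ∈ u, x ∈ C := fun x hx => htC (hsub hx)
  have hne : ∀ x ∈ u, W x ≠ 0 := by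
    intro x hx; rw [hu] at hx; exact (Finset.mem_filter.1 hx).2
  have hs0 : ∑ x ∈ u, W x = 0 := by
    rw [hu, Finset.sum_filter_of_ne (fun x _ h => h)]; exact h0
  have hv0 : ∑ x ∈ u, W x • x = 0 := by
    rw [hu, Finset.sum_filter_of_ne (fun x _ h => ?_)]
    · exact h1
    · intro hW; exact h (by rw [hW, zero_smul])
  suffices hemp : u = ∅ by
    intro x hx
    by_contra hWx
    have : x ∈ u := by rw [hu]; exact Finset.mem_filter.2 ⟨hx, hWx⟩
    simp [hemp] at this
  by_contra hnemp
  have hcard : u.card ≤ 4 := (Finset.card_le_card hsub).trans htc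
  have hc : u.card = 1 ∨ u.card = 2 ∨ u.card = 3 ∨ u.card = 4 := by
    have : u.card ≠ 0 := fun h => hnemp (Finset.card_eq_zero.1 h)
    omega
  rcases hc with h | h | h | h
  · obtain ⟨a, rfl⟩ := Finset.card_eq_one.1 h
    rw [Finset.sum_singleton] at hs0
    exact hne a (by simp) hs0
  · obtain ⟨a, b, hab, rfl⟩ := Finset.card_eq_two.1 h
    rw [Finset.sum_insert (by simp [hab]), Finset.sum_singleton] at hs0 hv0
    have ma : a ∈ ({a, b} : Finset _) := by simp
    have mb : b ∈ ({a, b} : Finset _) := by simp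
    rcases zmod3_cases _ (hne a ma) with h1 | h1 <;>
      rcases zmod3_cases _ (hne b mb) with h2 | h2 <;>
        rw [h1, h2] at hs0 hv0 <;>
        simp only [one_smul, two_smul_neg] at hv0 <;>
        first
          | exact absurd hs0 (by decide)
          | exact hab (by linear_combination hv0)
          | exact hab (by linear_combination -hv0)
  · obtain ⟨a, b, c, hab, hac, hbc, rfl⟩ := Finset.card_eq_three.1 h
    rw [Finset.sum_insert (by simp [hab, hac]), Finset.sum_insert (by simp [hbc]),
      Finset.sum_singleton] at hs0 hv0
    have ma : a ∈ ({a, b, c} : Finset _) := by simp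
    have mb : b ∈ ({a, b, c} : Finset _) := by simp
    have mc : c ∈ ({a, b, c} : Finset _) := by simp
    rcases zmod3_cases _ (hne a ma) with h1 | h1 <;>
      rcases zmod3_cases _ (hne b mb) with h2 | h2 <;>
        rcases zmod3_cases _ (hne c mc) with h3 | h3 <;>
          rw [h1, h2, h3] at hs0 hv0 <;>
          simp only [one_smul, two_smul_neg] at hv0 <;>
          first
            | exact absurd hs0 (by decide)
            | exact sidon_false hS (hmemC a ma) (hmemC b mb) (hmemC c mc) (hmemC c mc)
                hac hac (by linear_combination hv0 - three_zero c)
            | exact sidon_false hS (hmemC a ma) (hmemC b mb) (hmemC c mc) (hmemC c mc)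
                hac hac (by linear_combination -hv0 - three_zero c)
  · obtain ⟨a, t3, hat3, hins, ht3⟩ := Finset.card_eq_succ.1 h
    obtain ⟨b, c, d, hbc, hbd, hcd, rfl⟩ := Finset.card_eq_three.1 ht3
    obtain ⟨hab, hac, had⟩ : a ≠ b ∧ a ≠ c ∧ a ≠ d := by simpa using hat3
    rw [← hins] at hs0 hv0 hmemC hne
    rw [Finset.sum_insert (by simp [hab, hac, had]), Finset.sum_insert (by simp [hbc, hbd]),
      Finset.sum_insert (by simp [hcd]), Finset.sum_singleton] at hs0 hv0
    have ma : a ∈ insert a ({b, c, d} : Finset _) := by simp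
    have mb : b ∈ insert a ({b, c, d} : Finset _) := by simp
    have mc : c ∈ insert a ({b, c, d} : Finset _) := by simp
    have md : d ∈ insert a ({b, c, d} : Finset _) := by simp
    have Ca := hmemC a ma
    have Cb := hmemC b mb
    have Cc := hmemC c mc
    have Cd := hmemC d md
    rcases zmod3_cases _ (hne a ma) with h1 | h1 <;>
      rcases zmod3_cases _ (hne b mb) with h2 | h2 <;>
        rcases zmod3_cases _ (hne c mc) with h3 | h3 <;>
          rcases zmod3_cases _ (hne d md) with h4 | h4 <;>
            rw [h1, h2, h3, h4] at hs0 hv0 <;>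
            simp only [one_smul, two_smul_neg] at hv0 <;>
            first
              | exact absurd hs0 (by decide)
              | exact sidon_false hS Ca Cb Cc Cd hac had (by linear_combination hv0)
              | exact sidon_false hS Ca Cc Cb Cd hab had (by linear_combination hv0)
              | exact sidon_false hS Ca Cd Cb Cc hab hac (by linear_combination hv0)
              | exact sidon_false hS Cb Cc Ca Cd (Ne.symm hab) hbd (by linear_combination hv0)
              | exact sidon_false hS Cb Cd Ca Cc (Ne.symm hab) hbc (by linear_combination hv0)
              | exact sidon_false hS Cc Cd Ca Cb (Ne.symm hac) (Ne.symm hbc) (by linear_combination hv0)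

/-- A subset of `F_3^n` is a `2`-cap iff it is a Sidon set. -/
theorem isCap_two_iff_isSidon {n : ℕ} (C : Set (Fin n → ZMod 3)) :
    IsCap 2 C ↔ IsSidon C := by
  constructor
  · intro hCap a ha b hb c hc d hd habcd
    by_cases hac : a = c
    · subst hac
      exact Or.inl ⟨rfl, add_left_cancel habcd⟩
    by_cases had : a = d
    · subst had
      right
      refine ⟨rfl, ?_⟩
      rw [add_comm c a] at habcd
      exact add_left_cancel habcd
    exfalso
    have hbc : b ≠ c := fun h => had (by subst h; rwa [add_comm a b, add_left_cancel_iff] at habcd)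
    have hbd : b ≠ d := by
      intro h; subst h
      rw [add_comm a b, add_comm c b] at habcd
      exact hac (add_left_cancel habcd)
    set S : Finset (Fin n → ZMod 3) := {a, b, c, d} with hS
    have hSsub : ↑S ⊆ C := by
      intro x hx
      simp only [hS, Finset.coe_insert, Set.mem_insert_iff, Finset.coe_singleton,
        Set.mem_singleton_iff] at hx
      rcases hx with rfl | rfl | rfl | rfl <;> assumption
    have hScard : S.card ≤ 2 + 2 := by
      have h1 := Finset.card_insert_le a ({b, c, d} : Finset _)
      have h2 := Finset.card_insert_le b ({c, d} : Finset _)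
      have h3 := Finset.card_insert_le c ({d} : Finset _)
      simp only [Finset.card_singleton] at h3
      simp only [hS]
      omega
    have hAI := hCap S hSsub hScard
    rw [affineIndependent_iff] at hAI
    set W : (Fin n → ZMod 3) → ZMod 3 := fun x =>
      (if x = a then 1 else 0) + (if x = b then 1 else 0) +
      (if x = c then 2 else 0) + (if x = d then 2 else 0) with hW
    have ha' : a ∈ S := by simp [hS]
    have hb' : b ∈ S := by simp [hS]
    have hc' : c ∈ S := by simp [hS]
    have hd' : d ∈ S := by simp [hS]
    have h0 : ∑ i : ↥S, W ↑i = 0 := by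
      rw [Finset.sum_coe_sort S W]
      simp only [hW, Finset.sum_add_distrib, Finset.sum_ite_eq', ha', hb', hc', hd', if_true]
      decide
    have h1 : ∑ i : ↥S, W ↑i • (i : Fin n → ZMod 3) = 0 := by
      rw [Finset.sum_coe_sort S (fun x => W x • x)]
      simp only [hW, add_smul, ite_smul, zero_smul, Finset.sum_add_distrib,
        Finset.sum_ite_eq', ha', hb', hc', hd', if_true, one_smul, two_smul_neg]
      linear_combination habcd
    have hz := hAI Finset.univ (fun i => W ↑i) (by simpa using h0) (by simpa using h1)
      ⟨a, ha'⟩ (Finset.mem_univ _)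
    have hWa : W a ≠ 0 := by
      by_cases hab : a = b <;> simp [hW, hab, hac, had, hbc, hbd] <;> decide
    exact hWa hz
  · intro hS s hsC hcard
    rw [affineIndependent_iff]
    intro t w hw hwp i hit
    classical
    set W : (Fin n → ZMod 3) → ZMod 3 := fun x => if h : x ∈ s then w ⟨x, h⟩ else 0 with hWdef
    have hWt : ∀ j : ↥s, W ↑j = w j := fun j => by simp [hWdef]
    set t' : Finset (Fin n → ZMod 3) := t.map (Function.Embedding.subtype _) with ht'
    have hsum1 : ∑ x ∈ t', W x = ∑ j ∈ t, w j := by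
      rw [ht', Finset.sum_map]
      exact Finset.sum_congr rfl fun j _ => hWt j
    have hsum2 : ∑ x ∈ t', W x • x = ∑ j ∈ t, w j • (j : Fin n → ZMod 3) := by
      rw [ht', Finset.sum_map]
      exact Finset.sum_congr rfl fun j _ =>
        congrArg (· • (j : Fin n → ZMod 3)) (hWt j)
    have ht'C : ↑t' ⊆ C := by
      intro x hx
      simp only [ht', Finset.coe_map, Set.mem_image, Finset.mem_coe] at hx
      obtain ⟨j, _, rfl⟩ := hx
      exact hsC j.2
    have ht'card : t'.card ≤ 4 := by
      rw [ht', Finset.card_map]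
      calc t.card ≤ Finset.univ.card := Finset.card_le_univ t
        _ = s.card := by simp
        _ ≤ 4 := hcard
    have := sidon_dep hS t' ht'C ht'card W (by rw [hsum1]; exact hw) (by rw [hsum2]; exact hwp)
      ↑i (by rw [ht']; exact Finset.mem_map_of_mem _ hit)
    rwa [hWt i] at this
end

section
/- If n is even, then the maximal size of a Sidon set (equivalently, 2-cap) in F_3^n equals 3^{n/2}. -/
lemma isSidon_map {G H : Type*} [AddCommGroup G] [AddCommGroup H] (e : G ≃+ H)
    {A : Set G} (hA : IsSidon A) : IsSidon (e '' A) := by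
  rintro _ ⟨a, ha, rfl⟩ _ ⟨b, hb, rfl⟩ _ ⟨c, hc, rfl⟩ _ ⟨d, hd, rfl⟩ h
  rw [← map_add, ← map_add] at h
  have h' := e.injective h
  rcases hA a ha b hb c hc d hd h' with ⟨rfl, rfl⟩ | ⟨rfl, rfl⟩
  · exact Or.inl ⟨rfl, rfl⟩
  · exact Or.inr ⟨rfl, rfl⟩

lemma isSidon_parabola (K : Type*) [Field K] (h2 : (2 : K) ≠ 0) :
    IsSidon {p : K × K | p.2 = p.1 * p.1} := by
  rintro ⟨a, a2⟩ (ha : a2 = a * a) ⟨b, b2⟩ (hb : b2 = b * b) ⟨c, c2⟩ (hc : c2 = c * c)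
    ⟨d, d2⟩ (hd : d2 = d * d) h
  subst ha hb hc hd
  rw [Prod.ext_iff] at h
  obtain ⟨h1, hsq⟩ := h
  simp only [Prod.fst_add, Prod.snd_add] at h1 hsq
  simp only [Prod.mk.injEq]
  have hmul : a * b = c * d := by
    have h22 : 2 * (a * b) = 2 * (c * d) := by linear_combination (a + b + c + d) * h1 - hsq
    exact mul_left_cancel₀ h2 h22
  have key : (a - c) * (a - d) = 0 := by linear_combination a * h1 - hmul
  rcases mul_eq_zero.mp key with hac | had
  · have hac' : a = c := by linear_combination hac
    have hbd : b = d := by linear_combination h1 - hac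
    subst hac' hbd
    exact Or.inl ⟨⟨rfl, rfl⟩, rfl, rfl⟩
  · have had' : a = d := by linear_combination had
    have hbc : b = c := by linear_combination h1 - had
    subst had' hbc
    exact Or.inr ⟨⟨rfl, rfl⟩, rfl, rfl⟩

lemma isSidon_mono {G : Type*} [AddCommGroup G] {A B : Set G} (h : A ⊆ B)
    (hB : IsSidon B) : IsSidon A :=
  fun a ha b hb c hc d hd he => hB a (h ha) b (h hb) c (h hc) d (h hd) he

/-- If `n` is even, the maximal size of a Sidon set (equivalently, 2-cap) in
`F_3^n` is `3^(n/2)`. -/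
theorem max_sidon_card_even (n : ℕ) (hn : Even n) :
    IsGreatest {k : ℕ | ∃ C : Finset (Fin n → ZMod 3), IsSidon (C : Set (Fin n → ZMod 3)) ∧ C.card = k}
      (3 ^ (n / 2)) := by
  classical
  obtain ⟨k, hk⟩ := hn
  have hcardG : Fintype.card (Fin n → ZMod 3) = 3 ^ n := by simp
  constructor
  · -- construction
    subst hk
    have hdiv : (k + k) / 2 = k := by omega
    rcases Nat.eq_zero_or_pos k with rfl | hkpos
    · haveI hS : Subsingleton (Fin (0 + 0) → ZMod 3) :=
        ⟨fun f g => funext fun i => absurd i.isLt (by omega)⟩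
      refine ⟨{0}, ?_, by simp⟩
      intro a _ b _ c _ d _ _
      exact Or.inl ⟨Subsingleton.elim _ _, Subsingleton.elim _ _⟩
    · haveI : Fact (Nat.Prime 3) := ⟨by norm_num⟩
      set K := GaloisField 3 k with hK
      haveI : Fintype K := Fintype.ofFinite K
      have hfr : Module.finrank (ZMod 3) (K × K)
          = Module.finrank (ZMod 3) (Fin (k + k) → ZMod 3) := by
        rw [Module.finrank_prod, GaloisField.finrank 3 hkpos.ne',
          Module.finrank_pi, Fintype.card_fin]
      obtain ⟨e⟩ := FiniteDimensional.nonempty_linearEquiv_of_finrank_eq hfr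
      have h2 : (2 : K) ≠ 0 := by
        intro h
        have : ((2 : ℕ) : K) = 0 := by exact_mod_cast h
        have := (CharP.cast_eq_zero_iff K 3 2).mp this
        norm_num at this
      set P : Finset (K × K) := Finset.univ.image (fun x : K => (x, x * x)) with hP
      have hPinj : Function.Injective (fun x : K => (x, x * x)) := by
        intro x y hxy
        exact (Prod.ext_iff.mp hxy).1
      have hPcard : P.card = 3 ^ k := by
        rw [hP, Finset.card_image_of_injective _ hPinj, Finset.card_univ,
          ← Nat.card_eq_fintype_card]
        exact GaloisField.card 3 k hkpos.ne' 
      have hPsub : (P : Set (K × K)) ⊆ {p : K × K | p.2 = p.1 * p.1} := by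
        intro p hp
        simp only [hP, Finset.coe_image, Finset.coe_univ, Set.image_univ,
          Set.mem_range] at hp
        obtain ⟨x, rfl⟩ := hp
        rfl
      have hPsidon : IsSidon (P : Set (K × K)) :=
        isSidon_mono hPsub (isSidon_parabola K h2)
      refine ⟨P.image e.toAddEquiv, ?_, ?_⟩
      · rw [Finset.coe_image]
        exact isSidon_map e.toAddEquiv hPsidon
      · rw [Finset.card_image_of_injective _ e.toAddEquiv.injective, hPcard, hdiv]
  · -- upper bound
    rintro m ⟨C, hC, rfl⟩
    by_contra hlt
    push_neg at hlt
    have hcard : C.card * C.card - C.card ≤ 3 ^ n - 1 := by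
      have key := Finset.card_le_card_of_injOn
        (s := C.offDiag) (t := Finset.univ.erase (0 : Fin n → ZMod 3))
        (fun p => p.1 - p.2) ?_ ?_
      · rwa [Finset.offDiag_card, Finset.card_erase_of_mem (Finset.mem_univ 0),
          Finset.card_univ, hcardG] at key
      · intro p hp
        rw [Finset.mem_coe, Finset.mem_offDiag] at hp
        exact Finset.mem_erase.mpr ⟨sub_ne_zero_of_ne hp.2.2, Finset.mem_univ _⟩
      · intro p hp q hq hpq
        rw [Finset.mem_coe, Finset.mem_offDiag] at hp hq
        have hadd : p.1 + q.2 = q.1 + p.2 := by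
          have := sub_eq_sub_iff_add_eq_add.mp hpq
          linear_combination this
        rcases hC p.1 hp.1 q.2 hq.2.1 q.1 hq.1 p.2 hp.2.1 hadd with ⟨h1, h2⟩ | ⟨h1, h2⟩
        · exact Prod.ext h1 h2.symm
        · exact absurd h1 hp.2.2
    subst hk
    have hdiv : (k + k) / 2 = k := by omega
    rw [hdiv] at hlt
    set t := 3 ^ k with ht
    have ht1 : 1 ≤ t := Nat.one_le_pow _ _ (by norm_num)
    have hpow : 3 ^ (k + k) = t * t := by rw [pow_add]
    rw [hpow] at hcard
    have hm : t + 1 ≤ C.card := hlt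
    have hid : C.card * (C.card - 1) = C.card * C.card - C.card := Nat.mul_pred ..
    have h5 : (t + 1) * t ≤ C.card * (C.card - 1) :=
      Nat.mul_le_mul hm (by omega)
    have h6 : (t + 1) * t = t * t + t := by ring
    omega
end

section
/- If n is even, then F_3^n can be partitioned into 3^{n/2} pairwise disjoint maximal Sidon sets (maximal 2-caps), each of size 3^{n/2}. -/
lemma sidon_ncard_le {G : Type*} [AddCommGroup G] [Fintype G] [DecidableEq G]
    {q : ℕ} (hq : 1 ≤ q) (hcard : Fintype.card G = q * q)
    {T : Set G} (hT : IsSidon T) : T.ncard ≤ q := by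
  classical
  set s : Finset G := T.toFinite.toFinset with hs
  have hks : T.ncard = s.card := by rw [hs, Set.ncard_eq_toFinset_card]
  have hmem : ∀ x ∈ s, x ∈ T := by intro x hx; exact (Set.Finite.mem_toFinset _).mp hx
  have hinj : Set.InjOn (fun p : G × G => p.1 - p.2) (s.offDiag : Set (G × G)) := by
    intro p hp r hr h
    simp only [Finset.mem_coe, Finset.mem_offDiag] at hp hr
    obtain ⟨hp1, hp2, hpne⟩ := hp
    obtain ⟨hr1, hr2, hrne⟩ := hr
    have hadd : p.1 + r.2 = r.1 + p.2 := sub_eq_sub_iff_add_eq_add.mp h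
    rcases hT p.1 (hmem _ hp1) r.2 (hmem _ hr2) r.1 (hmem _ hr1) p.2 (hmem _ hp2) hadd with
      ⟨h1, h2⟩ | ⟨h1, h2⟩
    · exact Prod.ext h1 h2.symm
    · exact absurd h1 hpne
  have himage : (s.offDiag).image (fun p : G × G => p.1 - p.2) ⊆ Finset.univ.erase 0 := by
    intro x hx
    simp only [Finset.mem_image] at hx
    obtain ⟨p, hp, rfl⟩ := hx
    have := (Finset.mem_offDiag.mp hp).2.2
    exact Finset.mem_erase.mpr ⟨sub_ne_zero.mpr this, Finset.mem_univ _⟩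
  have hc1 : s.offDiag.card ≤ q * q - 1 := by
    have h1 := Finset.card_le_card himage
    rwa [Finset.card_image_of_injOn (by exact_mod_cast hinj),
      Finset.card_erase_of_mem (Finset.mem_univ _), Finset.card_univ, hcard] at h1
  rw [Finset.offDiag_card] at hc1
  rw [hks]
  by_contra hlt
  push_neg at hlt
  have h2 : (q + 1) * q ≤ s.card * (s.card - 1) :=
    Nat.mul_le_mul hlt (by omega)
  have h3 : s.card * (s.card - 1) = s.card * s.card - s.card := by
    cases s.card with
    | zero => simp
    | succ m => simp [Nat.succ_sub_one, Nat.mul_succ, Nat.succ_mul]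
  have h4 : (q + 1) * q = q * q + q := by ring
  omega

lemma isSidon_image {G H : Type*} [AddCommGroup G] [AddCommGroup H] (e : G ≃+ H)
    {A : Set G} (h : IsSidon A) : IsSidon (⇑e '' A) := by
  rintro _ ⟨a, ha, rfl⟩ _ ⟨b, hb, rfl⟩ _ ⟨c, hc, rfl⟩ _ ⟨d, hd, rfl⟩ hsum
  rw [← map_add, ← map_add] at hsum
  have := e.injective hsum
  rcases h a ha b hb c hc d hd this with ⟨h1, h2⟩ | ⟨h1, h2⟩
  · exact Or.inl ⟨congrArg e h1, congrArg e h2⟩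
  · exact Or.inr ⟨congrArg e h1, congrArg e h2⟩

lemma parabola_isSidon {F : Type*} [Field F] (h3 : (3 : F) = 0) (a : F) :
    IsSidon {p : F × F | p.2 = p.1 ^ 2 + a} := by
  rintro ⟨x, px⟩ hx ⟨y, py⟩ hy ⟨z, pz⟩ hz ⟨w, pw⟩ hw hsum
  simp only [Set.mem_setOf_eq] at hx hy hz hw
  subst hx; subst hy; subst hz; subst hw
  rw [Prod.ext_iff] at hsum
  obtain ⟨h1, h2'⟩ := hsum
  simp only [Prod.fst_add, Prod.snd_add] at h1 h2'
  have h2 : x ^ 2 + y ^ 2 = z ^ 2 + w ^ 2 := by linear_combination h2'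
  have h2a : (2 : F) * ((z - x) * (z - y)) = 0 := by
    linear_combination (x + y - z + w) * h1 - h2
  have hT : (z - x) * (z - y) = 0 := by
    linear_combination 2 * h2a - ((z - x) * (z - y)) * h3
  rcases mul_eq_zero.mp hT with h | h
  · have hzx : z = x := by linear_combination h
    subst hzx
    have hwy : w = y := by linear_combination -h1
    subst hwy
    exact Or.inl ⟨rfl, rfl⟩
  · have hzy : z = y := by linear_combination h
    subst hzy
    have hwx : w = x := by linear_combination -h1
    subst hwx
    exact Or.inr ⟨rfl, rfl⟩

/-- If `n` is even, `F_3^n` can be partitioned into `3^(n/2)` pairwise disjoint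
maximal Sidon sets, each of size `3^(n/2)`. -/
theorem partition_into_maximal_sidon (n : ℕ) (hn : Even n) :
    ∃ S : Fin (3 ^ (n / 2)) → Set (Fin n → ZMod 3),
      Pairwise (fun i j => Disjoint (S i) (S j)) ∧
      (⋃ i, S i) = Set.univ ∧
      ∀ i, IsSidon (S i) ∧ (S i).ncard = 3 ^ (n / 2) ∧
        ∀ T : Set (Fin n → ZMod 3), IsSidon T → T.ncard ≤ (S i).ncard := by
  classical
  obtain ⟨m, hm⟩ := hn
  have hnm : n / 2 = m := by omega
  rw [hnm]
  have hcardG : Fintype.card (Fin n → ZMod 3) = 3 ^ m * 3 ^ m := by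
    rw [Fintype.card_fun, ZMod.card, Fintype.card_fin, hm, pow_add]
  rcases Nat.eq_zero_or_pos m with hmz | hmpos
  · -- degenerate case: n = 0
    subst hmz
    have hn0 : n = 0 := by omega
    subst hn0
    haveI : Subsingleton (Fin 0 → ZMod 3) := by
      constructor; intro a b; funext i; exact absurd i.2 (by omega)
    haveI : Nonempty (Fin (3 ^ 0)) := ⟨⟨0, by norm_num⟩⟩
    refine ⟨fun _ => Set.univ, ?_, ?_, ?_⟩
    · intro i j hij
      have h1 := i.2
      have h2 := j.2
      norm_num at h1 h2
      exact absurd (Fin.ext (by omega)) hij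
    · exact Set.iUnion_const Set.univ
    · intro i
      have hcard1 : (Set.univ : Set (Fin 0 → ZMod 3)).ncard = 1 := by
        rw [Set.ncard_univ, Nat.card_eq_fintype_card]
        simpa using hcardG
      refine ⟨?_, by simpa using hcard1, ?_⟩
      · intro a _ b _ c _ d _ _
        exact Or.inl ⟨Subsingleton.elim a c, Subsingleton.elim b d⟩
      · intro T _
        exact Set.ncard_le_ncard (Set.subset_univ T) (Set.toFinite _)
  · have hmz : m ≠ 0 := by omega
    set F := GaloisField 3 m with hF
    haveI : Fact (Nat.Prime 3) := ⟨by norm_num⟩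
    haveI : Fintype F := Fintype.ofFinite F
    have hcardF : Fintype.card F = 3 ^ m := by
      rw [← Nat.card_eq_fintype_card]; exact GaloisField.card 3 m hmz
    have h3 : (3 : F) = 0 := by
      have := CharP.cast_eq_zero F 3
      exact_mod_cast this
    have hfr : Module.finrank (ZMod 3) (Fin n → ZMod 3) = Module.finrank (ZMod 3) (F × F) := by
      rw [Module.finrank_pi, Module.finrank_prod, GaloisField.finrank 3 hmz]
      simp [hm]
    obtain ⟨el⟩ := FiniteDimensional.nonempty_linearEquiv_of_finrank_eq hfr
    set e : (Fin n → ZMod 3) ≃+ F × F := el.toAddEquiv with he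
    set ι : Fin (3 ^ m) ≃ F := (Fintype.equivFinOfCardEq hcardF).symm with hι
    set P : F → Set (F × F) := fun a => {p : F × F | p.2 = p.1 ^ 2 + a} with hP
    refine ⟨fun i => ⇑e.symm '' P (ι i), ?_, ?_, ?_⟩
    · -- pairwise disjoint
      intro i j hij
      rw [Set.disjoint_left]
      rintro g ⟨p, hp, rfl⟩ ⟨r, hr, hgr⟩
      have hpr : p = r := e.symm.injective hgr.symm
      subst hpr
      simp only [hP, Set.mem_setOf_eq] at hp hr
      have : ι i = ι j := by
        have := hp.symm.trans hr
        exact add_left_cancel this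
      exact hij (ι.injective this)
    · -- union is everything
      ext g
      simp only [Set.mem_iUnion, Set.mem_univ, iff_true]
      refine ⟨ι.symm ((e g).2 - (e g).1 ^ 2), e g, ?_, e.symm_apply_apply g⟩
      simp only [hP, Set.mem_setOf_eq, Equiv.apply_symm_apply]
      ring
    · intro i
      have hsid : IsSidon (⇑e.symm '' P (ι i)) :=
        isSidon_image e.symm (parabola_isSidon h3 (ι i))
      have hncard : (⇑e.symm '' P (ι i)).ncard = 3 ^ m := by
        rw [Set.ncard_image_of_injective _ e.symm.injective]
        have : P (ι i) = Set.range (fun x : F => (x, x ^ 2 + ι i)) := by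
          ext p
          simp only [hP, Set.mem_setOf_eq, Set.mem_range]
          constructor
          · intro h
            exact ⟨p.1, by rw [← h]⟩
          · rintro ⟨x, rfl⟩
            rfl
        rw [this, ← Nat.card_coe_set_eq,
          Nat.card_range_of_injective (f := fun x : F => (x, x ^ 2 + ι i))
            (fun x y hxy => congrArg Prod.fst hxy), Nat.card_eq_fintype_card, hcardF]
      refine ⟨hsid, hncard, ?_⟩
      intro T hT
      rw [hncard]
      exact sidon_ncard_le (Nat.one_le_pow _ _ (by norm_num)) hcardG hT
end

section
/- If {a, b, c, d} is a 2-cap of size four in F_3^n, then {a, b, c, d, a+b+c+d} is a 2-cap of size five. -/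
abbrev HW {n : ℕ} (a b c d : Fin n → ZMod 3) : Prop :=
  ∀ w : Fin 4 → ZMod 3, w 0 + w 1 + w 2 + w 3 = 0 →
    w 0 • a + w 1 • b + w 2 • c + w 3 • d = 0 → ∀ i, w i = 0

lemma affInd_iff4 {n : ℕ} (p : Fin 4 → (Fin n → ZMod 3)) :
    AffineIndependent (ZMod 3) p ↔ HW (p 0) (p 1) (p 2) (p 3) := by
  rw [affineIndependent_iff_of_fintype]
  constructor
  · intro h w hw hs
    apply h w
    · simpa [Fin.sum_univ_four] using hw
    · rw [Finset.weightedVSub_eq_linear_combination _ (by simpa [Fin.sum_univ_four] using hw)]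
      simpa [Fin.sum_univ_four] using hs
  · intro h w hw hs
    apply h w (by simpa [Fin.sum_univ_four] using hw)
    rw [Finset.weightedVSub_eq_linear_combination _ hw] at hs
    simpa [Fin.sum_univ_four] using hs

lemma HW.ne {n : ℕ} {a b c d : Fin n → ZMod 3} (H : HW a b c d) : b + c + d ≠ 0 := by
  intro h
  have := H ![0, 1, 1, 1] (by decide) (by
    show (0 : ZMod 3) • a + (1 : ZMod 3) • b + (1 : ZMod 3) • c + (1 : ZMod 3) • d = 0
    simpa using h) 1
  simp at this

lemma HW.ext {n : ℕ} {a b c d : Fin n → ZMod 3} (H : HW a b c d) :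
    AffineIndependent (ZMod 3) ![a + b + c + d, b, c, d] := by
  rw [affInd_iff4]
  intro w hw hs
  simp only [Matrix.cons_val_zero, Matrix.cons_val_one, Matrix.head_cons,
    Matrix.cons_val_two, Matrix.tail_cons, Matrix.cons_val_three] at hs
  have key := H ![w 0, w 0 + w 1, w 0 + w 2, w 0 + w 3]
    (by
      show w 0 + (w 0 + w 1) + (w 0 + w 2) + (w 0 + w 3) = 0
      have h3 : (3 : ZMod 3) = 0 := rfl
      linear_combination hw + w 0 * h3)
    (by
      show w 0 • a + (w 0 + w 1) • b + (w 0 + w 2) • c + (w 0 + w 3) • d = 0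
      rw [← hs]; module)
  have h0 : w 0 = 0 := key 0
  intro i
  fin_cases i
  · exact h0
  · have := key 1; simp [h0] at this; simpa using this
  · have := key 2; simp [h0] at this; simpa using this
  · have := key 3; simp [h0] at this; simpa using this

lemma HW.permb {n : ℕ} {a b c d : Fin n → ZMod 3} (H : HW a b c d) : HW b a c d := by
  intro w hw hs
  have key := H ![w 1, w 0, w 2, w 3]
    (by show w 1 + w 0 + w 2 + w 3 = 0; linear_combination hw)
    (by show w 1 • a + w 0 • b + w 2 • c + w 3 • d = 0; rw [← hs]; module)
  intro i; fin_cases i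
  · exact key 1
  · exact key 0
  · exact key 2
  · exact key 3

lemma HW.permc {n : ℕ} {a b c d : Fin n → ZMod 3} (H : HW a b c d) : HW c a b d := by
  intro w hw hs
  have key := H ![w 1, w 2, w 0, w 3]
    (by show w 1 + w 2 + w 0 + w 3 = 0; linear_combination hw)
    (by show w 1 • a + w 2 • b + w 0 • c + w 3 • d = 0; rw [← hs]; module)
  intro i; fin_cases i
  · exact key 2
  · exact key 0
  · exact key 1
  · exact key 3

lemma HW.permd {n : ℕ} {a b c d : Fin n → ZMod 3} (H : HW a b c d) : HW d a b c := by
  intro w hw hs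
  have key := H ![w 1, w 2, w 3, w 0]
    (by show w 1 + w 2 + w 3 + w 0 = 0; linear_combination hw)
    (by show w 1 • a + w 2 • b + w 3 • c + w 0 • d = 0; rw [← hs]; module)
  intro i; fin_cases i
  · exact key 3
  · exact key 0
  · exact key 1
  · exact key 2

/-- If `{a,b,c,d}` is a 2-cap of size four in `F_3^n`, then
`{a,b,c,d,a+b+c+d}` is a 2-cap of size five. -/
theorem cap_extend {n : ℕ} (a b c d : Fin n → ZMod 3)
    (hcard : ({a, b, c, d} : Set (Fin n → ZMod 3)).ncard = 4)
    (hcap : IsCap 2 ({a, b, c, d} : Set (Fin n → ZMod 3))) :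
    IsCap 2 ({a, b, c, d, a + b + c + d} : Set (Fin n → ZMod 3)) ∧
      ({a, b, c, d, a + b + c + d} : Set (Fin n → ZMod 3)).ncard = 5 := by
  have le3 : ∀ x y z : Fin n → ZMod 3, ({x, y, z} : Set (Fin n → ZMod 3)).ncard ≤ 3 := by
    intro x y z
    calc ({x, y, z} : Set (Fin n → ZMod 3)).ncard ≤ ({y, z} : Set _).ncard + 1 :=
          Set.ncard_insert_le _ _
      _ ≤ (({z} : Set _).ncard + 1) + 1 := by gcongr; exact Set.ncard_insert_le _ _
      _ ≤ 3 := by simp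
  have hab : a ≠ b := by
    rintro rfl
    rw [show ({a, a, c, d} : Set (Fin n → ZMod 3)) = {a, c, d} by ext x; simp; try tauto] at hcard
    have := le3 a c d; omega
  have hac : a ≠ c := by
    rintro rfl
    rw [show ({a, b, a, d} : Set (Fin n → ZMod 3)) = {a, b, d} by ext x; simp; try tauto] at hcard
    have := le3 a b d; omega
  have had : a ≠ d := by
    rintro rfl
    rw [show ({a, b, c, a} : Set (Fin n → ZMod 3)) = {a, b, c} by ext x; simp; try tauto] at hcard
    have := le3 a b c; omega
  have hbc : b ≠ c := by
    rintro rfl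
    rw [show ({a, b, b, d} : Set (Fin n → ZMod 3)) = {a, b, d} by ext x; simp; try tauto] at hcard
    have := le3 a b d; omega
  have hbd : b ≠ d := by
    rintro rfl
    rw [show ({a, b, c, b} : Set (Fin n → ZMod 3)) = {a, b, c} by ext x; simp; try tauto] at hcard
    have := le3 a b c; omega
  have hcd : c ≠ d := by
    rintro rfl
    rw [show ({a, b, c, c} : Set (Fin n → ZMod 3)) = {a, b, c} by ext x; simp; try tauto] at hcard
    have := le3 a b c; omega
  have hinj : Function.Injective ![a, b, c, d] := by
    intro i j h
    fin_cases i <;> fin_cases j <;>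
      simp only [Matrix.cons_val_zero, Matrix.cons_val_one, Matrix.head_cons,
        Matrix.cons_val_two, Matrix.tail_cons, Matrix.cons_val_three, Fin.isValue] at h <;>
      first
      | rfl
      | exact absurd h hab | exact absurd h hac | exact absurd h had
      | exact absurd h hbc | exact absurd h hbd | exact absurd h hcd
      | exact absurd h.symm hab | exact absurd h.symm hac | exact absurd h.symm had
      | exact absurd h.symm hbc | exact absurd h.symm hbd | exact absurd h.symm hcd
  have hmem4 : ∀ i, ![a, b, c, d] i ∈ ({a, b, c, d} : Finset (Fin n → ZMod 3)) := by
    intro i; fin_cases i <;> simp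
  have haff : AffineIndependent (ZMod 3) ![a, b, c, d] := by
    have hsub : ↑({a, b, c, d} : Finset (Fin n → ZMod 3)) ⊆
        ({a, b, c, d} : Set (Fin n → ZMod 3)) := by simp
    have hc4 : ({a, b, c, d} : Finset (Fin n → ZMod 3)).card ≤ 2 + 2 := by
      have h1 := Finset.card_insert_le a ({b, c, d} : Finset (Fin n → ZMod 3))
      have h2 := Finset.card_insert_le b ({c, d} : Finset (Fin n → ZMod 3))
      have h3 := Finset.card_insert_le c ({d} : Finset (Fin n → ZMod 3))
      simp only [Finset.card_singleton] at *
      omega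
    have key := hcap ({a, b, c, d} : Finset (Fin n → ZMod 3)) hsub hc4
    have hcomp := key.comp_embedding
      ⟨fun i => ⟨![a, b, c, d] i, hmem4 i⟩, fun i j h => hinj (congrArg Subtype.val h)⟩
    have heq : ((↑) : ({a, b, c, d} : Finset (Fin n → ZMod 3)) → (Fin n → ZMod 3)) ∘
        (⟨fun i => ⟨![a, b, c, d] i, hmem4 i⟩,
          fun i j h => hinj (congrArg Subtype.val h)⟩ : Fin 4 ↪ _) = ![a, b, c, d] := by
      funext i; fin_cases i <;> rfl
    rwa [heq] at hcomp
  have H : HW a b c d := by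
    have := (affInd_iff4 ![a, b, c, d]).1 haff
    simpa using this
  have hea : a + b + c + d ≠ a := fun h => H.ne (by linear_combination h)
  have heb : a + b + c + d ≠ b := fun h => H.permb.ne (by linear_combination h)
  have hec : a + b + c + d ≠ c := fun h => H.permc.ne (by linear_combination h)
  have hed : a + b + c + d ≠ d := fun h => H.permd.ne (by linear_combination h)
  have A0 : AffineIndependent (ZMod 3) ![a + b + c + d, b, c, d] := H.ext
  have A1 : AffineIndependent (ZMod 3) ![a + b + c + d, a, c, d] := by
    have := H.permb.ext
    rwa [show b + a + c + d = a + b + c + d by ring] at this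
  have A2 : AffineIndependent (ZMod 3) ![a + b + c + d, a, b, d] := by
    have := H.permc.ext
    rwa [show c + a + b + d = a + b + c + d by ring] at this
  have A3 : AffineIndependent (ZMod 3) ![a + b + c + d, a, b, c] := by
    have := H.permd.ext
    rwa [show d + a + b + c = a + b + c + d by ring] at this
  have hfive : ({a, b, c, d, a + b + c + d} : Finset (Fin n → ZMod 3)).card = 5 := by
    rw [Finset.card_insert_of_notMem (by
      simp only [Finset.mem_insert, Finset.mem_singleton]; push_neg
      exact ⟨hab, hac, had, Ne.symm hea⟩)]
    rw [Finset.card_insert_of_notMem (by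
      simp only [Finset.mem_insert, Finset.mem_singleton]; push_neg
      exact ⟨hbc, hbd, Ne.symm heb⟩)]
    rw [Finset.card_insert_of_notMem (by
      simp only [Finset.mem_insert, Finset.mem_singleton]; push_neg
      exact ⟨hcd, Ne.symm hec⟩)]
    rw [Finset.card_insert_of_notMem (by
      simp only [Finset.mem_singleton]; exact Ne.symm hed)]
    simp
  constructor
  · intro s hsub hcard4
    by_cases he : a + b + c + d ∈ s
    · by_cases ha' : a ∈ s
      · by_cases hb' : b ∈ s
        · by_cases hc' : c ∈ s
          · -- then d ∉ s, else 5 elements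
            have hd' : d ∉ s := by
              intro hd'
              have hsub5 : ({a, b, c, d, a + b + c + d} : Finset (Fin n → ZMod 3)) ⊆ s := by
                simp [Finset.insert_subset_iff, ha', hb', hc', hd', he]
              have := Finset.card_le_card hsub5
              omega
            refine (A3.range.mono ?_ : _)
            intro x hx
            have hx' := hsub hx
            simp only [Set.mem_insert_iff, Set.mem_singleton_iff] at hx'
            simp only [Set.mem_range]
            rcases hx' with rfl | rfl | rfl | rfl | rfl
            · exact ⟨1, rfl⟩
            · exact ⟨2, rfl⟩
            · exact ⟨3, rfl⟩
            · exact absurd hx hd'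
            · exact ⟨0, rfl⟩
          · refine (A2.range.mono ?_ : _)
            intro x hx
            have hx' := hsub hx
            simp only [Set.mem_insert_iff, Set.mem_singleton_iff] at hx'
            simp only [Set.mem_range]
            rcases hx' with rfl | rfl | rfl | rfl | rfl
            · exact ⟨1, rfl⟩
            · exact ⟨2, rfl⟩
            · exact absurd hx hc'
            · exact ⟨3, rfl⟩
            · exact ⟨0, rfl⟩
        · refine (A1.range.mono ?_ : _)
          intro x hx
          have hx' := hsub hx
          simp only [Set.mem_insert_iff, Set.mem_singleton_iff] at hx'
          simp only [Set.mem_range]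
          rcases hx' with rfl | rfl | rfl | rfl | rfl
          · exact ⟨1, rfl⟩
          · exact absurd hx hb'
          · exact ⟨2, rfl⟩
          · exact ⟨3, rfl⟩
          · exact ⟨0, rfl⟩
      · refine (A0.range.mono ?_ : _)
        intro x hx
        have hx' := hsub hx
        simp only [Set.mem_insert_iff, Set.mem_singleton_iff] at hx'
        simp only [Set.mem_range]
        rcases hx' with rfl | rfl | rfl | rfl | rfl
        · exact absurd hx ha'
        · exact ⟨1, rfl⟩
        · exact ⟨2, rfl⟩
        · exact ⟨3, rfl⟩
        · exact ⟨0, rfl⟩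
    · apply hcap s _ hcard4
      intro x hx
      have hx' := hsub hx
      simp only [Set.mem_insert_iff, Set.mem_singleton_iff] at hx' ⊢
      rcases hx' with rfl | rfl | rfl | rfl | rfl
      · exact Or.inl rfl
      · exact Or.inr (Or.inl rfl)
      · exact Or.inr (Or.inr (Or.inl rfl))
      · exact Or.inr (Or.inr (Or.inr rfl))
      · exact absurd hx he
  · rw [show ({a, b, c, d, a + b + c + d} : Set (Fin n → ZMod 3)) =
        ↑({a, b, c, d, a + b + c + d} : Finset (Fin n → ZMod 3)) by simp]
    rw [Set.ncard_coe_finset, hfive]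
end

section
/- Every complete 2-cap in F_3^3 has size exactly 5; in particular, every complete 2-cap in F_3^3 is maximal. -/
abbrev V3 := Fin 3 → ZMod 3

lemma h3V : (3 : V3) = 0 := by decide

lemma trichZ : ∀ x : ZMod 3, x = 0 ∨ x = 1 ∨ x = 2 := by decide

def SidonS (S : Set V3) : Prop :=
  ∀ a ∈ S, ∀ b ∈ S, ∀ c ∈ S, ∀ d ∈ S, a + b = c + d → (a = c ∧ b = d) ∨ (a = d ∧ b = c)

set_option maxHeartbeats 4000000 in
lemma indep2 (q : Fin 2 → V3)
    (hq : ∀ i j k l : Fin 2, q i + q j = q k + q l → (i = k ∧ j = l) ∨ (i = l ∧ j = k)) :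
    AffineIndependent (ZMod 3) q := by
  have hch : (3 : V3) = 0 := h3V
  rw [affineIndependent_iff]
  intro t w hw hv
  obtain ⟨w', hw'⟩ : ∃ w' : Fin 2 → ZMod 3, w' = fun i => if i ∈ t then w i else 0 := ⟨_, rfl⟩
  suffices hall : ∀ i, w' i = 0 by
    intro e he; have h := hall e; rw [hw'] at h; simpa [he] using h
  have hw4 : w' 0 + w' 1 = 0 := by
    rw [show w' 0 + w' 1 = ∑ i, w' i from (Fin.sum_univ_two w').symm, hw']
    simp only [Finset.sum_ite_mem, Finset.univ_inter]; exact hw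
  have hv4 : w' 0 • q 0 + w' 1 • q 1 = 0 := by
    rw [show w' 0 • q 0 + w' 1 • q 1 = ∑ i, w' i • q i from (Fin.sum_univ_two (fun i => w' i • q i)).symm, hw']
    simp only [ite_smul, zero_smul, Finset.sum_ite_mem, Finset.univ_inter]; exact hv
  clear hw hv
  rcases trichZ (w' 0) with h0 | h0 | h0 <;>
    rcases trichZ (w' 1) with h1 | h1 | h1 <;>
    rw [h0, h1] at hw4 hv4 <;>
    simp only [zero_smul, one_smul, two_smul, add_zero, zero_add] at hv4 <;>
    first
    | (intro i; fin_cases i <;> assumption)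
    | (exact absurd hw4 (by decide))
    | (have heq : q 0 + q 0 = q 1 + q 1 := (by linear_combination 2 * hv4 + ((-2) * q 1) * hch); rcases hq 0 0 1 1 heq with ⟨h, -⟩ | ⟨h, -⟩ <;> exact absurd h (by decide))
    | (have heq : q 0 + q 0 = q 1 + q 1 := (by linear_combination hv4 + ((-1) * q 1) * hch); rcases hq 0 0 1 1 heq with ⟨h, -⟩ | ⟨h, -⟩ <;> exact absurd h (by decide))


set_option maxHeartbeats 4000000 in
lemma indep3 (q : Fin 3 → V3)
    (hq : ∀ i j k l : Fin 3, q i + q j = q k + q l → (i = k ∧ j = l) ∨ (i = l ∧ j = k)) :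
    AffineIndependent (ZMod 3) q := by
  have hch : (3 : V3) = 0 := h3V
  rw [affineIndependent_iff]
  intro t w hw hv
  obtain ⟨w', hw'⟩ : ∃ w' : Fin 3 → ZMod 3, w' = fun i => if i ∈ t then w i else 0 := ⟨_, rfl⟩
  suffices hall : ∀ i, w' i = 0 by
    intro e he; have h := hall e; rw [hw'] at h; simpa [he] using h
  have hw4 : w' 0 + w' 1 + w' 2 = 0 := by
    rw [show w' 0 + w' 1 + w' 2 = ∑ i, w' i from (Fin.sum_univ_three w').symm, hw']
    simp only [Finset.sum_ite_mem, Finset.univ_inter]; exact hw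
  have hv4 : w' 0 • q 0 + w' 1 • q 1 + w' 2 • q 2 = 0 := by
    rw [show w' 0 • q 0 + w' 1 • q 1 + w' 2 • q 2 = ∑ i, w' i • q i from (Fin.sum_univ_three (fun i => w' i • q i)).symm, hw']
    simp only [ite_smul, zero_smul, Finset.sum_ite_mem, Finset.univ_inter]; exact hv
  clear hw hv
  rcases trichZ (w' 0) with h0 | h0 | h0 <;>
    rcases trichZ (w' 1) with h1 | h1 | h1 <;>
    rcases trichZ (w' 2) with h2 | h2 | h2 <;>
    rw [h0, h1, h2] at hw4 hv4 <;>
    simp only [zero_smul, one_smul, two_smul, add_zero, zero_add] at hv4 <;>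
    first
    | (intro i; fin_cases i <;> assumption)
    | (exact absurd hw4 (by decide))
    | (have heq : q 1 + q 1 = q 2 + q 2 := (by linear_combination 2 * hv4 + ((-2) * q 2) * hch); rcases hq 1 1 2 2 heq with ⟨h, -⟩ | ⟨h, -⟩ <;> exact absurd h (by decide))
    | (have heq : q 1 + q 1 = q 2 + q 2 := (by linear_combination hv4 + ((-1) * q 2) * hch); rcases hq 1 1 2 2 heq with ⟨h, -⟩ | ⟨h, -⟩ <;> exact absurd h (by decide))
    | (have heq : q 0 + q 0 = q 2 + q 2 := (by linear_combination 2 * hv4 + ((-2) * q 2) * hch); rcases hq 0 0 2 2 heq with ⟨h, -⟩ | ⟨h, -⟩ <;> exact absurd h (by decide))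
    | (have heq : q 0 + q 1 = q 2 + q 2 := (by linear_combination hv4 + ((-1) * q 2) * hch); rcases hq 0 1 2 2 heq with ⟨h, -⟩ | ⟨h, -⟩ <;> exact absurd h (by decide))
    | (have heq : q 0 + q 0 = q 1 + q 1 := (by linear_combination 2 * hv4 + ((-2) * q 1) * hch); rcases hq 0 0 1 1 heq with ⟨h, -⟩ | ⟨h, -⟩ <;> exact absurd h (by decide))
    | (have heq : q 0 + q 0 = q 2 + q 2 := (by linear_combination hv4 + ((-1) * q 2) * hch); rcases hq 0 0 2 2 heq with ⟨h, -⟩ | ⟨h, -⟩ <;> exact absurd h (by decide))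
    | (have heq : q 0 + q 0 = q 1 + q 1 := (by linear_combination hv4 + ((-1) * q 1) * hch); rcases hq 0 0 1 1 heq with ⟨h, -⟩ | ⟨h, -⟩ <;> exact absurd h (by decide))
    | (have heq : q 0 + q 1 = q 2 + q 2 := (by linear_combination 2 * hv4 + ((-1) * q 0 + (-1) * q 1 + (-2) * q 2) * hch); rcases hq 0 1 2 2 heq with ⟨h, -⟩ | ⟨h, -⟩ <;> exact absurd h (by decide))


set_option maxHeartbeats 4000000 in
lemma indep4 (q : Fin 4 → V3)
    (hq : ∀ i j k l : Fin 4, q i + q j = q k + q l → (i = k ∧ j = l) ∨ (i = l ∧ j = k)) :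
    AffineIndependent (ZMod 3) q := by
  have hch : (3 : V3) = 0 := h3V
  rw [affineIndependent_iff]
  intro t w hw hv
  obtain ⟨w', hw'⟩ : ∃ w' : Fin 4 → ZMod 3, w' = fun i => if i ∈ t then w i else 0 := ⟨_, rfl⟩
  suffices hall : ∀ i, w' i = 0 by
    intro e he; have h := hall e; rw [hw'] at h; simpa [he] using h
  have hw4 : w' 0 + w' 1 + w' 2 + w' 3 = 0 := by
    rw [show w' 0 + w' 1 + w' 2 + w' 3 = ∑ i, w' i from (Fin.sum_univ_four w').symm, hw']
    simp only [Finset.sum_ite_mem, Finset.univ_inter]; exact hw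
  have hv4 : w' 0 • q 0 + w' 1 • q 1 + w' 2 • q 2 + w' 3 • q 3 = 0 := by
    rw [show w' 0 • q 0 + w' 1 • q 1 + w' 2 • q 2 + w' 3 • q 3 = ∑ i, w' i • q i from (Fin.sum_univ_four (fun i => w' i • q i)).symm, hw']
    simp only [ite_smul, zero_smul, Finset.sum_ite_mem, Finset.univ_inter]; exact hv
  clear hw hv
  rcases trichZ (w' 0) with h0 | h0 | h0 <;>
    rcases trichZ (w' 1) with h1 | h1 | h1 <;>
    rcases trichZ (w' 2) with h2 | h2 | h2 <;>
    rcases trichZ (w' 3) with h3 | h3 | h3 <;>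
    rw [h0, h1, h2, h3] at hw4 hv4 <;>
    simp only [zero_smul, one_smul, two_smul, add_zero, zero_add] at hv4 <;>
    first
    | (intro i; fin_cases i <;> assumption)
    | (exact absurd hw4 (by decide))
    | (have heq : q 2 + q 2 = q 3 + q 3 := (by linear_combination 2 * hv4 + ((-2) * q 3) * hch); rcases hq 2 2 3 3 heq with ⟨h, -⟩ | ⟨h, -⟩ <;> exact absurd h (by decide))
    | (have heq : q 2 + q 2 = q 3 + q 3 := (by linear_combination hv4 + ((-1) * q 3) * hch); rcases hq 2 2 3 3 heq with ⟨h, -⟩ | ⟨h, -⟩ <;> exact absurd h (by decide))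
    | (have heq : q 1 + q 1 = q 3 + q 3 := (by linear_combination 2 * hv4 + ((-2) * q 3) * hch); rcases hq 1 1 3 3 heq with ⟨h, -⟩ | ⟨h, -⟩ <;> exact absurd h (by decide))
    | (have heq : q 1 + q 2 = q 3 + q 3 := (by linear_combination hv4 + ((-1) * q 3) * hch); rcases hq 1 2 3 3 heq with ⟨h, -⟩ | ⟨h, -⟩ <;> exact absurd h (by decide))
    | (have heq : q 1 + q 1 = q 2 + q 2 := (by linear_combination 2 * hv4 + ((-2) * q 2) * hch); rcases hq 1 1 2 2 heq with ⟨h, -⟩ | ⟨h, -⟩ <;> exact absurd h (by decide))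
    | (have heq : q 1 + q 1 = q 3 + q 3 := (by linear_combination hv4 + ((-1) * q 3) * hch); rcases hq 1 1 3 3 heq with ⟨h, -⟩ | ⟨h, -⟩ <;> exact absurd h (by decide))
    | (have heq : q 1 + q 1 = q 2 + q 2 := (by linear_combination hv4 + ((-1) * q 2) * hch); rcases hq 1 1 2 2 heq with ⟨h, -⟩ | ⟨h, -⟩ <;> exact absurd h (by decide))
    | (have heq : q 1 + q 2 = q 3 + q 3 := (by linear_combination 2 * hv4 + ((-1) * q 1 + (-1) * q 2 + (-2) * q 3) * hch); rcases hq 1 2 3 3 heq with ⟨h, -⟩ | ⟨h, -⟩ <;> exact absurd h (by decide))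
    | (have heq : q 0 + q 0 = q 3 + q 3 := (by linear_combination 2 * hv4 + ((-2) * q 3) * hch); rcases hq 0 0 3 3 heq with ⟨h, -⟩ | ⟨h, -⟩ <;> exact absurd h (by decide))
    | (have heq : q 0 + q 2 = q 3 + q 3 := (by linear_combination hv4 + ((-1) * q 3) * hch); rcases hq 0 2 3 3 heq with ⟨h, -⟩ | ⟨h, -⟩ <;> exact absurd h (by decide))
    | (have heq : q 0 + q 0 = q 2 + q 2 := (by linear_combination 2 * hv4 + ((-2) * q 2) * hch); rcases hq 0 0 2 2 heq with ⟨h, -⟩ | ⟨h, -⟩ <;> exact absurd h (by decide))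
    | (have heq : q 0 + q 1 = q 3 + q 3 := (by linear_combination hv4 + ((-1) * q 3) * hch); rcases hq 0 1 3 3 heq with ⟨h, -⟩ | ⟨h, -⟩ <;> exact absurd h (by decide))
    | (have heq : q 0 + q 1 = q 2 + q 2 := (by linear_combination hv4 + ((-1) * q 2) * hch); rcases hq 0 1 2 2 heq with ⟨h, -⟩ | ⟨h, -⟩ <;> exact absurd h (by decide))
    | (have heq : q 0 + q 1 = q 2 + q 3 := (by linear_combination hv4 + ((-1) * q 2 + (-1) * q 3) * hch); rcases hq 0 1 2 3 heq with ⟨h, -⟩ | ⟨h, -⟩ <;> exact absurd h (by decide))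
    | (have heq : q 0 + q 0 = q 1 + q 1 := (by linear_combination 2 * hv4 + ((-2) * q 1) * hch); rcases hq 0 0 1 1 heq with ⟨h, -⟩ | ⟨h, -⟩ <;> exact absurd h (by decide))
    | (have heq : q 0 + q 2 = q 1 + q 3 := (by linear_combination hv4 + ((-1) * q 1 + (-1) * q 3) * hch); rcases hq 0 2 1 3 heq with ⟨h, -⟩ | ⟨h, -⟩ <;> exact absurd h (by decide))
    | (have heq : q 0 + q 3 = q 1 + q 2 := (by linear_combination hv4 + ((-1) * q 1 + (-1) * q 2) * hch); rcases hq 0 3 1 2 heq with ⟨h, -⟩ | ⟨h, -⟩ <;> exact absurd h (by decide))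
    | (have heq : q 0 + q 0 = q 3 + q 3 := (by linear_combination hv4 + ((-1) * q 3) * hch); rcases hq 0 0 3 3 heq with ⟨h, -⟩ | ⟨h, -⟩ <;> exact absurd h (by decide))
    | (have heq : q 0 + q 0 = q 2 + q 2 := (by linear_combination hv4 + ((-1) * q 2) * hch); rcases hq 0 0 2 2 heq with ⟨h, -⟩ | ⟨h, -⟩ <;> exact absurd h (by decide))
    | (have heq : q 0 + q 2 = q 3 + q 3 := (by linear_combination 2 * hv4 + ((-1) * q 0 + (-1) * q 2 + (-2) * q 3) * hch); rcases hq 0 2 3 3 heq with ⟨h, -⟩ | ⟨h, -⟩ <;> exact absurd h (by decide))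
    | (have heq : q 0 + q 0 = q 1 + q 1 := (by linear_combination hv4 + ((-1) * q 1) * hch); rcases hq 0 0 1 1 heq with ⟨h, -⟩ | ⟨h, -⟩ <;> exact absurd h (by decide))
    | (have heq : q 1 + q 2 = q 0 + q 3 := (by linear_combination hv4 + ((-1) * q 0 + (-1) * q 3) * hch); rcases hq 1 2 0 3 heq with ⟨h, -⟩ | ⟨h, -⟩ <;> exact absurd h (by decide))
    | (have heq : q 1 + q 3 = q 0 + q 2 := (by linear_combination hv4 + ((-1) * q 0 + (-1) * q 2) * hch); rcases hq 1 3 0 2 heq with ⟨h, -⟩ | ⟨h, -⟩ <;> exact absurd h (by decide))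
    | (have heq : q 0 + q 1 = q 3 + q 3 := (by linear_combination 2 * hv4 + ((-1) * q 0 + (-1) * q 1 + (-2) * q 3) * hch); rcases hq 0 1 3 3 heq with ⟨h, -⟩ | ⟨h, -⟩ <;> exact absurd h (by decide))
    | (have heq : q 2 + q 3 = q 0 + q 1 := (by linear_combination hv4 + ((-1) * q 0 + (-1) * q 1) * hch); rcases hq 2 3 0 1 heq with ⟨h, -⟩ | ⟨h, -⟩ <;> exact absurd h (by decide))
    | (have heq : q 0 + q 1 = q 2 + q 2 := (by linear_combination 2 * hv4 + ((-1) * q 0 + (-1) * q 1 + (-2) * q 2) * hch); rcases hq 0 1 2 2 heq with ⟨h, -⟩ | ⟨h, -⟩ <;> exact absurd h (by decide))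



lemma indepAny (m : ℕ) (hm : m ≤ 4) (q : Fin m → V3)
    (hq : ∀ i j k l, q i + q j = q k + q l → (i = k ∧ j = l) ∨ (i = l ∧ j = k)) :
    AffineIndependent (ZMod 3) q := by
  interval_cases m
  · exact affineIndependent_of_subsingleton _ _
  · exact affineIndependent_of_subsingleton _ _
  · exact indep2 q hq
  · exact indep3 q hq
  · exact indep4 q hq

lemma sidon_isCap {S : Set V3} (h : SidonS S) : IsCap 2 S := by
  intro s hs hcard
  have e := s.equivFin
  have hinj : Function.Injective ((fun x : s => (x : V3)) ∘ e.symm) :=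
    Subtype.coe_injective.comp e.symm.injective
  have key : AffineIndependent (ZMod 3) ((fun x : s => (x : V3)) ∘ e.symm) := by
    apply indepAny s.card (by omega)
    intro i j k l hsum
    have mem : ∀ i : Fin s.card, (((e.symm i : s) : V3)) ∈ S := fun i => hs (e.symm i).2
    rcases h _ (mem i) _ (mem j) _ (mem k) _ (mem l) hsum with ⟨h1, h2⟩ | ⟨h1, h2⟩
    · exact Or.inl ⟨hinj h1, hinj h2⟩
    · exact Or.inr ⟨hinj h1, hinj h2⟩
  exact (affineIndependent_equiv e.symm).mp key
lemma notindep3 {x y z : V3} (hxy : x ≠ y) (hxz : x ≠ z) (hyz : y ≠ z)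
    (hsum : x + y + z = 0) {C : Set V3} (hx : x ∈ C) (hy : y ∈ C) (hz : z ∈ C)
    (hcap : IsCap 2 C) : False := by
  have hc : ({x, y, z} : Finset V3).card ≤ 2 + 2 := by
    have h1 := Finset.card_insert_le x ({y, z} : Finset V3)
    have h2 := Finset.card_insert_le y ({z} : Finset V3)
    simp only [Finset.card_singleton] at h1 h2
    omega
  have hsub : ↑({x, y, z} : Finset V3) ⊆ C := by
    intro v hv
    simp only [Finset.coe_insert, Set.mem_insert_iff, Finset.coe_singleton,
      Set.mem_singleton_iff] at hv
    rcases hv with rfl | rfl | rfl <;> assumption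
  have hAI := hcap _ hsub hc
  have hAI2 := hAI.comp_embedding
    (⟨fun i => ⟨![x, y, z] i, by fin_cases i <;> simp⟩, by
      intro i j hij
      simp only [Subtype.mk.injEq] at hij
      fin_cases i <;> fin_cases j <;> simp_all⟩ : Fin 3 ↪ ({x, y, z} : Finset V3))
  have h0 := affineIndependent_iff.mp hAI2 Finset.univ ![1, 1, 1]
    (by decide)
    (by
      rw [Fin.sum_univ_three]
      show (1 : ZMod 3) • x + (1 : ZMod 3) • y + (1 : ZMod 3) • z = 0
      simp only [one_smul]
      linear_combination hsum) 0 (Finset.mem_univ _)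
  exact absurd h0 (by decide)

lemma notindep4 {x y z w : V3} (hxy : x ≠ y) (hxz : x ≠ z) (hxw : x ≠ w)
    (hyz : y ≠ z) (hyw : y ≠ w) (hzw : z ≠ w)
    (hsum : x + y = z + w) {C : Set V3} (hx : x ∈ C) (hy : y ∈ C) (hz : z ∈ C) (hw : w ∈ C)
    (hcap : IsCap 2 C) : False := by
  have h3 : (3 : V3) = 0 := h3V
  have hc : ({x, y, z, w} : Finset V3).card ≤ 2 + 2 := by
    have h1 := Finset.card_insert_le x ({y, z, w} : Finset V3)
    have h2 := Finset.card_insert_le y ({z, w} : Finset V3)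
    have h4 := Finset.card_insert_le z ({w} : Finset V3)
    simp only [Finset.card_singleton] at h1 h2 h4
    omega
  have hsub : ↑({x, y, z, w} : Finset V3) ⊆ C := by
    intro v hv
    simp only [Finset.coe_insert, Set.mem_insert_iff, Finset.coe_singleton,
      Set.mem_singleton_iff] at hv
    rcases hv with rfl | rfl | rfl | rfl <;> assumption
  have hAI := hcap _ hsub hc
  have hAI2 := hAI.comp_embedding
    (⟨fun i => ⟨![x, y, z, w] i, by fin_cases i <;> simp⟩, by
      intro i j hij
      simp only [Subtype.mk.injEq] at hij
      fin_cases i <;> fin_cases j <;> simp_all⟩ : Fin 4 ↪ ({x, y, z, w} : Finset V3))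
  have h0 := affineIndependent_iff.mp hAI2 Finset.univ ![1, 1, 2, 2]
    (by decide)
    (by
      rw [Fin.sum_univ_four]
      show (1 : ZMod 3) • x + (1 : ZMod 3) • y + (2 : ZMod 3) • z + (2 : ZMod 3) • w = 0
      simp only [one_smul, two_smul]
      linear_combination hsum + (z + w) * h3) 0 (Finset.mem_univ _)
  exact absurd h0 (by decide)

lemma isCap_sidon {C : Set V3} (hcap : IsCap 2 C) : SidonS C := by
  have h3 : (3 : V3) = 0 := h3V
  intro a ha b hb c hc d hd heq
  by_cases hac : a = c
  · subst hac
    left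
    exact ⟨rfl, by linear_combination heq⟩
  by_cases had : a = d
  · subst had
    right
    exact ⟨rfl, by linear_combination heq⟩
  have hbc : b ≠ c := fun h => had (by subst h; linear_combination heq)
  have hbd : b ≠ d := fun h => hac (by subst h; linear_combination heq)
  exfalso
  by_cases hab : a = b
  · subst hab
    by_cases hcd : c = d
    · subst hcd
      exact hac (by linear_combination 2 * heq + (c - a) * h3)
    · exact notindep3 hac had hcd (by linear_combination 2 * heq + (c + d - a) * h3) ha hc hd hcap
  · by_cases hcd : c = d
    · subst hcd
      exact notindep3 hab hac hbc (by linear_combination heq + c * h3) ha hb hc hcap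
    · exact notindep4 hab hac had hbc hbd hcd heq ha hb hc hd hcap
lemma sidon_insert {C : Finset V3} {x : V3} (hC : SidonS ↑C) (hx : x ∉ C)
    (h1 : ∀ u ∈ C, ∀ v ∈ C, ∀ w ∈ C, x + u ≠ v + w)
    (h2 : ∀ v ∈ C, ∀ w ∈ C, x + x ≠ v + w) :
    SidonS ↑(insert x C) := by
  intro a ha b hb c hc d hd heq
  simp only [Finset.coe_insert, Set.mem_insert_iff, Finset.mem_coe] at ha hb hc hd
  rcases ha with rfl | ha <;> rcases hb with rfl | hb <;>
    rcases hc with rfl | hc <;> rcases hd with rfl | hd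
  · exact Or.inl ⟨rfl, rfl⟩
  · exact absurd hd (by rw [show d = c from by linear_combination -heq]; exact hx)
  · exact absurd hc (by rw [show c = d from by linear_combination -heq]; exact hx)
  · exact absurd heq (h2 c hc d hd)
  · exact absurd hb (by rw [show b = d from by linear_combination heq]; exact hx)
  · exact Or.inl ⟨rfl, by linear_combination heq⟩
  · exact Or.inr ⟨rfl, by linear_combination heq⟩
  · exact absurd heq (h1 b hb c hc d hd)
  · exact absurd ha (by rw [show a = d from by linear_combination heq]; exact hx)
  · exact Or.inr ⟨by linear_combination heq, rfl⟩
  · exact Or.inl ⟨by linear_combination heq, rfl⟩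
  · exact absurd (show b + a = c + d by linear_combination heq) (h1 a ha c hc d hd)
  · exact absurd (show d + d = a + b by linear_combination -heq) (h2 a ha b hb)
  · exact absurd (show c + d = a + b by linear_combination -heq) (h1 d hd a ha b hb)
  · exact absurd (show d + c = a + b by linear_combination -heq) (h1 c hc a ha b hb)
  · exact hC a ha b hb c hc d hd heq
set_option maxHeartbeats 4000000 in
lemma ext4 (a b c d : V3) (hab : a ≠ b) (hac : a ≠ c) (had : a ≠ d)
    (hbc : b ≠ c) (hbd : b ≠ d) (hcd : c ≠ d)
    (hS : SidonS ↑({a, b, c, d} : Finset V3)) :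
    (a + b + c + d) ∉ ({a, b, c, d} : Finset V3) ∧
      SidonS ↑(insert (a + b + c + d) ({a, b, c, d} : Finset V3)) := by
  have hch : (3 : V3) = 0 := h3V
  have hx : (a + b + c + d) ∉ ({a, b, c, d} : Finset V3) := by
    simp only [Finset.mem_insert, Finset.mem_singleton]
    push_neg
    refine ⟨?_, ?_, ?_, ?_⟩
    · intro hh
      rcases hS b (by simp) c (by simp) d (by simp) d (by simp) (show b + c = d + d by linear_combination hh + ((-1) * d) * hch) with ⟨h, -⟩ | ⟨h, -⟩ <;> exact hbd h
    · intro hh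
      rcases hS a (by simp) c (by simp) d (by simp) d (by simp) (show a + c = d + d by linear_combination hh + ((-1) * d) * hch) with ⟨h, -⟩ | ⟨h, -⟩ <;> exact had h
    · intro hh
      rcases hS a (by simp) b (by simp) d (by simp) d (by simp) (show a + b = d + d by linear_combination hh + ((-1) * d) * hch) with ⟨h, -⟩ | ⟨h, -⟩ <;> exact had h
    · intro hh
      rcases hS a (by simp) b (by simp) c (by simp) c (by simp) (show a + b = c + c by linear_combination hh + ((-1) * c) * hch) with ⟨h, -⟩ | ⟨h, -⟩ <;> exact hac h
  refine ⟨hx, sidon_insert hS hx ?_ ?_⟩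
  · intro u hu v hv w hw heq
    simp only [Finset.mem_insert, Finset.mem_singleton] at hu hv hw
    rcases hu with hu | hu | hu | hu <;> rcases hv with hv | hv | hv | hv <;>
      rcases hw with hw | hw | hw | hw <;> rw [hu, hv, hw] at heq
    · rcases hS b (by simp) c (by simp) d (by simp) d (by simp) (show b + c = d + d by linear_combination heq + ((-1) * d) * hch) with ⟨h, -⟩ | ⟨h, -⟩ <;> exact hbd h
    · rcases hS a (by simp) c (by simp) d (by simp) d (by simp) (show a + c = d + d by linear_combination heq + ((-1) * d) * hch) with ⟨h, -⟩ | ⟨h, -⟩ <;> exact had h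
    · rcases hS a (by simp) b (by simp) d (by simp) d (by simp) (show a + b = d + d by linear_combination heq + ((-1) * d) * hch) with ⟨h, -⟩ | ⟨h, -⟩ <;> exact had h
    · rcases hS a (by simp) b (by simp) c (by simp) c (by simp) (show a + b = c + c by linear_combination heq + ((-1) * c) * hch) with ⟨h, -⟩ | ⟨h, -⟩ <;> exact hac h
    · rcases hS a (by simp) c (by simp) d (by simp) d (by simp) (show a + c = d + d by linear_combination heq + ((-1) * d) * hch) with ⟨h, -⟩ | ⟨h, -⟩ <;> exact had h
    · rcases hS c (by simp) d (by simp) a (by simp) b (by simp) (show c + d = a + b by linear_combination heq + ((-1) * a) * hch) with ⟨h, -⟩ | ⟨h, -⟩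
      · exact hac h.symm
      · exact hbc h.symm
    · exact had (by linear_combination 2 * heq + ((-1) * a + (-1) * d) * hch)
    · exact hac (by linear_combination 2 * heq + ((-1) * a + (-1) * c) * hch)
    · rcases hS a (by simp) b (by simp) d (by simp) d (by simp) (show a + b = d + d by linear_combination heq + ((-1) * d) * hch) with ⟨h, -⟩ | ⟨h, -⟩ <;> exact had h
    · exact had (by linear_combination 2 * heq + ((-1) * a + (-1) * d) * hch)
    · rcases hS b (by simp) d (by simp) a (by simp) c (by simp) (show b + d = a + c by linear_combination heq + ((-1) * a) * hch) with ⟨h, -⟩ | ⟨h, -⟩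
      · exact hab h.symm
      · exact hbc h
    · exact hab (by linear_combination 2 * heq + ((-1) * a + (-1) * b) * hch)
    · rcases hS a (by simp) b (by simp) c (by simp) c (by simp) (show a + b = c + c by linear_combination heq + ((-1) * c) * hch) with ⟨h, -⟩ | ⟨h, -⟩ <;> exact hac h
    · exact hac (by linear_combination 2 * heq + ((-1) * a + (-1) * c) * hch)
    · exact hab (by linear_combination 2 * heq + ((-1) * a + (-1) * b) * hch)
    · rcases hS b (by simp) c (by simp) a (by simp) d (by simp) (show b + c = a + d by linear_combination heq + ((-1) * a) * hch) with ⟨h, -⟩ | ⟨h, -⟩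
      · exact hab h.symm
      · exact hbd h
    · rcases hS c (by simp) d (by simp) a (by simp) b (by simp) (show c + d = a + b by linear_combination heq + ((-1) * b) * hch) with ⟨h, -⟩ | ⟨h, -⟩
      · exact hac h.symm
      · exact hbc h.symm
    · rcases hS b (by simp) c (by simp) d (by simp) d (by simp) (show b + c = d + d by linear_combination heq + ((-1) * d) * hch) with ⟨h, -⟩ | ⟨h, -⟩ <;> exact hbd h
    · exact hbd (by linear_combination 2 * heq + ((-1) * b + (-1) * d) * hch)
    · exact hbc (by linear_combination 2 * heq + ((-1) * b + (-1) * c) * hch)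
    · rcases hS b (by simp) c (by simp) d (by simp) d (by simp) (show b + c = d + d by linear_combination heq + ((-1) * d) * hch) with ⟨h, -⟩ | ⟨h, -⟩ <;> exact hbd h
    · rcases hS a (by simp) c (by simp) d (by simp) d (by simp) (show a + c = d + d by linear_combination heq + ((-1) * d) * hch) with ⟨h, -⟩ | ⟨h, -⟩ <;> exact had h
    · rcases hS a (by simp) b (by simp) d (by simp) d (by simp) (show a + b = d + d by linear_combination heq + ((-1) * d) * hch) with ⟨h, -⟩ | ⟨h, -⟩ <;> exact had h
    · rcases hS a (by simp) b (by simp) c (by simp) c (by simp) (show a + b = c + c by linear_combination heq + ((-1) * c) * hch) with ⟨h, -⟩ | ⟨h, -⟩ <;> exact hac h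
    · exact hbd (by linear_combination 2 * heq + ((-1) * b + (-1) * d) * hch)
    · rcases hS a (by simp) b (by simp) d (by simp) d (by simp) (show a + b = d + d by linear_combination heq + ((-1) * d) * hch) with ⟨h, -⟩ | ⟨h, -⟩ <;> exact had h
    · rcases hS a (by simp) d (by simp) b (by simp) c (by simp) (show a + d = b + c by linear_combination heq + ((-1) * b) * hch) with ⟨h, -⟩ | ⟨h, -⟩
      · exact hab h
      · exact hac h
    · exact hab (by linear_combination heq + ((-1) * b) * hch)
    · exact hbc (by linear_combination 2 * heq + ((-1) * b + (-1) * c) * hch)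
    · rcases hS a (by simp) b (by simp) c (by simp) c (by simp) (show a + b = c + c by linear_combination heq + ((-1) * c) * hch) with ⟨h, -⟩ | ⟨h, -⟩ <;> exact hac h
    · exact hab (by linear_combination heq + ((-1) * b) * hch)
    · rcases hS a (by simp) c (by simp) b (by simp) d (by simp) (show a + c = b + d by linear_combination heq + ((-1) * b) * hch) with ⟨h, -⟩ | ⟨h, -⟩
      · exact hab h
      · exact had h
    · rcases hS b (by simp) d (by simp) a (by simp) c (by simp) (show b + d = a + c by linear_combination heq + ((-1) * c) * hch) with ⟨h, -⟩ | ⟨h, -⟩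
      · exact hab h.symm
      · exact hbc h
    · exact hcd (by linear_combination 2 * heq + ((-1) * c + (-1) * d) * hch)
    · rcases hS b (by simp) c (by simp) d (by simp) d (by simp) (show b + c = d + d by linear_combination heq + ((-1) * d) * hch) with ⟨h, -⟩ | ⟨h, -⟩ <;> exact hbd h
    · exact hbc (by linear_combination heq + ((-1) * c) * hch)
    · exact hcd (by linear_combination 2 * heq + ((-1) * c + (-1) * d) * hch)
    · rcases hS a (by simp) d (by simp) b (by simp) c (by simp) (show a + d = b + c by linear_combination heq + ((-1) * c) * hch) with ⟨h, -⟩ | ⟨h, -⟩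
      · exact hab h
      · exact hac h
    · rcases hS a (by simp) c (by simp) d (by simp) d (by simp) (show a + c = d + d by linear_combination heq + ((-1) * d) * hch) with ⟨h, -⟩ | ⟨h, -⟩ <;> exact had h
    · exact hac (by linear_combination heq + ((-1) * c) * hch)
    · rcases hS b (by simp) c (by simp) d (by simp) d (by simp) (show b + c = d + d by linear_combination heq + ((-1) * d) * hch) with ⟨h, -⟩ | ⟨h, -⟩ <;> exact hbd h
    · rcases hS a (by simp) c (by simp) d (by simp) d (by simp) (show a + c = d + d by linear_combination heq + ((-1) * d) * hch) with ⟨h, -⟩ | ⟨h, -⟩ <;> exact had h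
    · rcases hS a (by simp) b (by simp) d (by simp) d (by simp) (show a + b = d + d by linear_combination heq + ((-1) * d) * hch) with ⟨h, -⟩ | ⟨h, -⟩ <;> exact had h
    · rcases hS a (by simp) b (by simp) c (by simp) c (by simp) (show a + b = c + c by linear_combination heq + ((-1) * c) * hch) with ⟨h, -⟩ | ⟨h, -⟩ <;> exact hac h
    · exact hbc (by linear_combination heq + ((-1) * c) * hch)
    · exact hac (by linear_combination heq + ((-1) * c) * hch)
    · rcases hS a (by simp) b (by simp) c (by simp) c (by simp) (show a + b = c + c by linear_combination heq + ((-1) * c) * hch) with ⟨h, -⟩ | ⟨h, -⟩ <;> exact hac h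
    · rcases hS a (by simp) b (by simp) c (by simp) d (by simp) (show a + b = c + d by linear_combination heq + ((-1) * c) * hch) with ⟨h, -⟩ | ⟨h, -⟩
      · exact hac h
      · exact had h
    · rcases hS b (by simp) c (by simp) a (by simp) d (by simp) (show b + c = a + d by linear_combination heq + ((-1) * d) * hch) with ⟨h, -⟩ | ⟨h, -⟩
      · exact hab h.symm
      · exact hbd h
    · exact hcd (by linear_combination heq + ((-1) * d) * hch)
    · exact hbd (by linear_combination heq + ((-1) * d) * hch)
    · rcases hS b (by simp) c (by simp) d (by simp) d (by simp) (show b + c = d + d by linear_combination heq + ((-1) * d) * hch) with ⟨h, -⟩ | ⟨h, -⟩ <;> exact hbd h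
    · exact hcd (by linear_combination heq + ((-1) * d) * hch)
    · rcases hS a (by simp) c (by simp) b (by simp) d (by simp) (show a + c = b + d by linear_combination heq + ((-1) * d) * hch) with ⟨h, -⟩ | ⟨h, -⟩
      · exact hab h
      · exact had h
    · exact had (by linear_combination heq + ((-1) * d) * hch)
    · rcases hS a (by simp) c (by simp) d (by simp) d (by simp) (show a + c = d + d by linear_combination heq + ((-1) * d) * hch) with ⟨h, -⟩ | ⟨h, -⟩ <;> exact had h
    · exact hbd (by linear_combination heq + ((-1) * d) * hch)
    · exact had (by linear_combination heq + ((-1) * d) * hch)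
    · rcases hS a (by simp) b (by simp) c (by simp) d (by simp) (show a + b = c + d by linear_combination heq + ((-1) * d) * hch) with ⟨h, -⟩ | ⟨h, -⟩
      · exact hac h
      · exact had h
    · rcases hS a (by simp) b (by simp) d (by simp) d (by simp) (show a + b = d + d by linear_combination heq + ((-1) * d) * hch) with ⟨h, -⟩ | ⟨h, -⟩ <;> exact had h
    · rcases hS b (by simp) c (by simp) d (by simp) d (by simp) (show b + c = d + d by linear_combination heq + ((-1) * d) * hch) with ⟨h, -⟩ | ⟨h, -⟩ <;> exact hbd h
    · rcases hS a (by simp) c (by simp) d (by simp) d (by simp) (show a + c = d + d by linear_combination heq + ((-1) * d) * hch) with ⟨h, -⟩ | ⟨h, -⟩ <;> exact had h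
    · rcases hS a (by simp) b (by simp) d (by simp) d (by simp) (show a + b = d + d by linear_combination heq + ((-1) * d) * hch) with ⟨h, -⟩ | ⟨h, -⟩ <;> exact had h
    · rcases hS a (by simp) b (by simp) c (by simp) c (by simp) (show a + b = c + c by linear_combination heq + ((-1) * c) * hch) with ⟨h, -⟩ | ⟨h, -⟩ <;> exact hac h
  · intro v hv w hw heq
    simp only [Finset.mem_insert, Finset.mem_singleton] at hv hw
    rcases hv with hv | hv | hv | hv <;> rcases hw with hw | hw | hw | hw <;>
      rw [hv, hw] at heq
    · rcases hS b (by simp) c (by simp) d (by simp) d (by simp) (show b + c = d + d by linear_combination 2 * heq + ((-1) * b + (-1) * c + (-2) * d) * hch) with ⟨h, -⟩ | ⟨h, -⟩ <;> exact hbd h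
    · rcases hS a (by simp) b (by simp) c (by simp) d (by simp) (show a + b = c + d by linear_combination heq + ((-1) * c + (-1) * d) * hch) with ⟨h, -⟩ | ⟨h, -⟩
      · exact hac h
      · exact had h
    · rcases hS a (by simp) c (by simp) b (by simp) d (by simp) (show a + c = b + d by linear_combination heq + ((-1) * b + (-1) * d) * hch) with ⟨h, -⟩ | ⟨h, -⟩
      · exact hab h
      · exact had h
    · rcases hS a (by simp) d (by simp) b (by simp) c (by simp) (show a + d = b + c by linear_combination heq + ((-1) * b + (-1) * c) * hch) with ⟨h, -⟩ | ⟨h, -⟩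
      · exact hab h
      · exact hac h
    · rcases hS a (by simp) b (by simp) c (by simp) d (by simp) (show a + b = c + d by linear_combination heq + ((-1) * c + (-1) * d) * hch) with ⟨h, -⟩ | ⟨h, -⟩
      · exact hac h
      · exact had h
    · rcases hS a (by simp) c (by simp) d (by simp) d (by simp) (show a + c = d + d by linear_combination 2 * heq + ((-1) * a + (-1) * c + (-2) * d) * hch) with ⟨h, -⟩ | ⟨h, -⟩ <;> exact had h
    · rcases hS b (by simp) c (by simp) a (by simp) d (by simp) (show b + c = a + d by linear_combination heq + ((-1) * a + (-1) * d) * hch) with ⟨h, -⟩ | ⟨h, -⟩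
      · exact hab h.symm
      · exact hbd h
    · rcases hS b (by simp) d (by simp) a (by simp) c (by simp) (show b + d = a + c by linear_combination heq + ((-1) * a + (-1) * c) * hch) with ⟨h, -⟩ | ⟨h, -⟩
      · exact hab h.symm
      · exact hbc h
    · rcases hS a (by simp) c (by simp) b (by simp) d (by simp) (show a + c = b + d by linear_combination heq + ((-1) * b + (-1) * d) * hch) with ⟨h, -⟩ | ⟨h, -⟩
      · exact hab h
      · exact had h
    · rcases hS b (by simp) c (by simp) a (by simp) d (by simp) (show b + c = a + d by linear_combination heq + ((-1) * a + (-1) * d) * hch) with ⟨h, -⟩ | ⟨h, -⟩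
      · exact hab h.symm
      · exact hbd h
    · rcases hS a (by simp) b (by simp) d (by simp) d (by simp) (show a + b = d + d by linear_combination 2 * heq + ((-1) * a + (-1) * b + (-2) * d) * hch) with ⟨h, -⟩ | ⟨h, -⟩ <;> exact had h
    · rcases hS c (by simp) d (by simp) a (by simp) b (by simp) (show c + d = a + b by linear_combination heq + ((-1) * a + (-1) * b) * hch) with ⟨h, -⟩ | ⟨h, -⟩
      · exact hac h.symm
      · exact hbc h.symm
    · rcases hS a (by simp) d (by simp) b (by simp) c (by simp) (show a + d = b + c by linear_combination heq + ((-1) * b + (-1) * c) * hch) with ⟨h, -⟩ | ⟨h, -⟩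
      · exact hab h
      · exact hac h
    · rcases hS b (by simp) d (by simp) a (by simp) c (by simp) (show b + d = a + c by linear_combination heq + ((-1) * a + (-1) * c) * hch) with ⟨h, -⟩ | ⟨h, -⟩
      · exact hab h.symm
      · exact hbc h
    · rcases hS c (by simp) d (by simp) a (by simp) b (by simp) (show c + d = a + b by linear_combination heq + ((-1) * a + (-1) * b) * hch) with ⟨h, -⟩ | ⟨h, -⟩
      · exact hac h.symm
      · exact hbc h.symm
    · rcases hS a (by simp) b (by simp) c (by simp) c (by simp) (show a + b = c + c by linear_combination 2 * heq + ((-1) * a + (-1) * b + (-2) * c) * hch) with ⟨h, -⟩ | ⟨h, -⟩ <;> exact hac h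

/-- Every complete 2-cap in `F_3^3` (a 2-cap not properly contained in any
larger 2-cap) has size exactly 5; in particular it is maximal. -/
theorem complete_cap_dim_three (C : Finset (Fin 3 → ZMod 3))
    (hC : IsCap 2 (C : Set (Fin 3 → ZMod 3)))
    (hcomplete : ∀ D : Finset (Fin 3 → ZMod 3), IsCap 2 (D : Set (Fin 3 → ZMod 3)) → C ⊆ D → C = D) :
    C.card = 5 := by
  have hsid : SidonS ↑C := isCap_sidon hC
  have hle : C.card ≤ 5 := by
    by_contra hgt
    push_neg at hgt
    have hinj : Set.InjOn (fun p : V3 × V3 => p.1 - p.2) ↑C.offDiag := by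
      rintro ⟨p1, p2⟩ hp ⟨q1, q2⟩ hq hpq
      simp only [Finset.mem_coe, Finset.mem_offDiag] at hp hq
      simp only at hpq
      have heq2 : p1 + q2 = q1 + p2 := by linear_combination hpq
      rcases hsid p1 hp.1 q2 hq.2.1 q1 hq.1 p2 hp.2.1 heq2 with ⟨h1, h2⟩ | ⟨h1, h2⟩
      · exact Prod.ext h1 h2.symm
      · exact absurd h1 hp.2.2
    have hmap : ∀ p ∈ C.offDiag, (fun p : V3 × V3 => p.1 - p.2) p ∈ Finset.univ.erase (0 : V3) := by
      rintro ⟨p1, p2⟩ hp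
      simp only [Finset.mem_offDiag] at hp
      simp only [Finset.mem_erase, Finset.mem_univ, and_true]
      exact sub_ne_zero_of_ne hp.2.2
    have hcard := Finset.card_le_card_of_injOn _ hmap hinj
    rw [Finset.offDiag_card] at hcard
    have h26 : (Finset.univ.erase (0 : V3)).card = 26 := by
      rw [Finset.card_erase_of_mem (Finset.mem_univ _), Finset.card_univ]
      have h27 : Fintype.card V3 = 27 := by simp
      omega
    rw [h26] at hcard
    have h6 : 6 ≤ C.card := hgt
    have key : 30 ≤ C.card * C.card - C.card := by
      calc (30 : ℕ) = 6 * 5 := rfl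
        _ ≤ C.card * (C.card - 1) := Nat.mul_le_mul h6 (by omega)
        _ = C.card * C.card - C.card := by
            rw [← Nat.pred_eq_sub_one, Nat.mul_pred]
    exact absurd (le_trans key hcard) (by norm_num)
  rcases Nat.lt_or_ge C.card 5 with hlt | hge
  swap
  · omega
  exfalso
  have hle4 : C.card ≤ 2 + 2 := by omega
  have hCind : AffineIndependent (ZMod 3) ((↑) : (↑C : Set V3) → V3) :=
    hC C subset_rfl hle4
  obtain ⟨t, hsub, hti, hspan⟩ := exists_subset_affineIndependent_affineSpan_eq_top hCind
  have htf : t.Finite := Set.toFinite t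
  have hDcap : IsCap 2 t := fun s hs _ => hti.mono hs
  have hCD : C = htf.toFinset := hcomplete htf.toFinset
    (by rwa [Set.Finite.coe_toFinset])
    (fun x hx => (Set.Finite.mem_toFinset htf).mpr (hsub hx))
  have hCt : (↑C : Set V3) = t := by rw [hCD, Set.Finite.coe_toFinset]
  rw [← hCt] at hspan
  have h4le : 4 ≤ C.card := by
    by_contra hlt4
    push_neg at hlt4
    rcases Nat.eq_zero_or_pos C.card with h0 | hpos
    · rw [Finset.card_eq_zero.mp h0] at hspan
      simp only [Finset.coe_empty] at hspan
      exact absurd hspan (by simp)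
    · have hb := finrank_vectorSpan_image_finset_le (ZMod 3) id C (n := C.card - 1)
        (by omega)
      rw [Finset.image_id] at hb
      have hvs : vectorSpan (ZMod 3) (↑C : Set V3) = ⊤ := by
        rw [← direction_affineSpan, hspan, AffineSubspace.direction_top]
      rw [hvs] at hb
      have hft : Module.finrank (ZMod 3) (⊤ : Submodule (ZMod 3) V3) = 3 := by
        rw [finrank_top]; simp
      rw [hft] at hb
      omega
  have hc4 : C.card = 4 := by omega
  obtain ⟨a, t4, hat, hins, ht3⟩ := Finset.card_eq_succ.mp hc4
  obtain ⟨b, c, d, hbc, hbd, hcd, ht⟩ := Finset.card_eq_three.mp ht3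
  subst ht
  simp only [Finset.mem_insert, Finset.mem_singleton, not_or] at hat
  obtain ⟨hab, hac, had⟩ := hat
  have hCeq : C = ({a, b, c, d} : Finset V3) := hins.symm
  rw [hCeq] at hsid
  obtain ⟨hx, hSx⟩ := ext4 a b c d hab hac had hbc hbd hcd hsid
  have hcap2 : IsCap 2 ↑(insert (a + b + c + d) ({a, b, c, d} : Finset V3)) := sidon_isCap hSx
  have hCD2 := hcomplete _ hcap2 (by rw [hCeq]; exact Finset.subset_insert _ _)
  have hxC : (a + b + c + d) ∈ C := by rw [hCD2]; exact Finset.mem_insert_self _ _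
  rw [hCeq] at hxC
  exact hx hxC
end

section
/- If n is odd with n ≥ 3, then r(2, F_3^n) ≥ 3^{(n-1)/2} + 1. -/
lemma sidon_map {G H : Type*} [AddCommGroup G] [AddCommGroup H] (f : G →+ H)
    (hf : Function.Injective f) {A : Set G} (hA : IsSidon A) : IsSidon (f '' A) := by
  rintro _ ⟨a, ha, rfl⟩ _ ⟨b, hb, rfl⟩ _ ⟨c, hc, rfl⟩ _ ⟨d, hd, rfl⟩ h
  rw [← map_add, ← map_add] at h
  rcases hA a ha b hb c hc d hd (hf h) with ⟨h1, h2⟩ | ⟨h1, h2⟩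
  · exact Or.inl ⟨by rw [h1], by rw [h2]⟩
  · exact Or.inr ⟨by rw [h1], by rw [h2]⟩

lemma sidon_graph {K : Type*} [Field K] (h3 : (3 : K) = 0) :
    IsSidon (Set.range (fun x : K => (x, x * x))) := by
  rintro _ ⟨x1, rfl⟩ _ ⟨x2, rfl⟩ _ ⟨x3, rfl⟩ _ ⟨x4, rfl⟩ h
  rw [Prod.ext_iff] at h
  obtain ⟨hs, hs2⟩ := h
  simp only [Prod.fst_add, Prod.snd_add] at hs hs2
  have hp : x1 * x2 = x3 * x4 := by
    linear_combination (x1 * x2 - x3 * x4) * h3 - (x1 + x2 + x3 + x4) * hs + hs2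
  have hz : (x3 - x1) * (x3 - x2) = 0 := by linear_combination (-x3) * hs + hp
  rcases mul_eq_zero.mp hz with hz | hz
  · have h1 : x1 = x3 := (sub_eq_zero.mp hz).symm
    have h2 : x2 = x4 := by linear_combination hs - h1
    exact Or.inl ⟨by rw [h1], by rw [h2]⟩
  · have h1 : x2 = x3 := (sub_eq_zero.mp hz).symm
    have h2 : x1 = x4 := by linear_combination hs - h1
    exact Or.inr ⟨by rw [h2], by rw [h1]⟩

lemma sidon_extend {G : Type*} [AddCommGroup G] {A : Set G} (hA : IsSidon A) :
    IsSidon ((fun a => (a, (0 : ZMod 3))) '' A ∪ {((0 : G), (1 : ZMod 3))}) := by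
  rintro a (⟨a', ha, rfl⟩ | rfl) b (⟨b', hb, rfl⟩ | rfl) c (⟨c', hc, rfl⟩ | rfl)
    d (⟨d', hd, rfl⟩ | rfl) h <;>
  simp only [Prod.mk_add_mk, Prod.mk.injEq, Prod.ext_iff] at h ⊢ <;>
  first
    | exact absurd h.2 (by decide)
    | (rcases hA a' ha b' hb c' hc d' hd h.1 with ⟨e1, e2⟩ | ⟨e1, e2⟩
       · exact Or.inl ⟨⟨e1, trivial⟩, ⟨e2, trivial⟩⟩
       · exact Or.inr ⟨⟨e1, trivial⟩, ⟨e2, trivial⟩⟩)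
    | ((refine Or.inl ⟨?_, ?_⟩ <;> simp_all); done)
    | ((refine Or.inr ⟨?_, ?_⟩ <;> simp_all); done)

/-- If `n` is odd with `n ≥ 3`, then `r(2, F_3^n) ≥ 3^((n-1)/2) + 1`:
there is a Sidon set of that size in `F_3^n`. -/
theorem sidon_lower_bound_odd (n : ℕ) (hn : Odd n) (hn3 : 3 ≤ n) :
    ∃ C : Finset (Fin n → ZMod 3), IsSidon (C : Set (Fin n → ZMod 3)) ∧
      C.card = 3 ^ ((n - 1) / 2) + 1 := by
  haveI : Fact (Nat.Prime 3) := ⟨by norm_num⟩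
  set m : ℕ := (n - 1) / 2 with hm_def
  have hm : m ≠ 0 := by omega
  have hn' : n = 2 * m + 1 := by
    obtain ⟨k, hk⟩ := hn; omega
  set K := GaloisField 3 m with hK
  haveI : Fintype K := Fintype.ofFinite K
  have hcardK : Fintype.card K = 3 ^ m := by
    rw [← Nat.card_eq_fintype_card]
    exact GaloisField.card 3 m hm
  -- linear equivalence onto `Fin n → ZMod 3`
  have hdim : Module.finrank (ZMod 3) ((K × K) × ZMod 3) = Module.finrank (ZMod 3) (Fin n → ZMod 3) := by
    rw [Module.finrank_prod, Module.finrank_prod, Module.finrank_self,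
      Module.finrank_fin_fun, GaloisField.finrank 3 hm]
    omega
  let e : ((K × K) × ZMod 3) ≃ₗ[ZMod 3] (Fin n → ZMod 3) :=
    LinearEquiv.ofFinrankEq _ _ hdim
  have he : Function.Injective e := e.injective
  classical
  refine ⟨(Finset.univ.image (fun x : K => e ((x, x * x), 0))) ∪ {e ((0, 0), 1)}, ?_, ?_⟩
  · -- Sidon property
    have hset : ((((Finset.univ.image (fun x : K => e ((x, x * x), 0))) ∪ {e ((0, 0), 1)}) :
        Finset (Fin n → ZMod 3)) : Set (Fin n → ZMod 3)) =
        e.toLinearMap.toAddMonoidHom ''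
          (((fun a => (a, (0 : ZMod 3))) '' (Set.range (fun x : K => (x, x * x)))) ∪
            {(((0 : K × K)), (1 : ZMod 3))}) := by
      rw [Set.image_union, Set.image_image, Set.image_singleton]
      push_cast
      congr 1
      · rw [Set.image_univ, ← Set.range_comp]
        rfl
    rw [hset]
    exact sidon_map _ he (sidon_extend (sidon_graph (by
      have := CharP.cast_eq_zero K 3
      push_cast at this
      exact this)))
  · -- cardinality
    have hinj : Function.Injective (fun x : K => e ((x, x * x), 0)) := by
      intro x y hxy
      have := he hxy
      exact (Prod.ext_iff.mp ((Prod.ext_iff.mp this).1)).1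
    have hnotmem : e ((0, 0), 1) ∉ Finset.univ.image (fun x : K => e ((x, x * x), 0)) := by
      simp only [Finset.mem_image, Finset.mem_univ, true_and]
      rintro ⟨x, hx⟩
      have := he hx
      have h2 := (Prod.ext_iff.mp this).2
      simp at h2
    rw [Finset.union_comm, Finset.card_union_of_disjoint (by simpa using hnotmem),
      Finset.card_image_of_injective _ hinj]
    simp [hcardK, Nat.add_comm]
end
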